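/- Assume the weight matrix ω is symmetric. Then the energy E is coercive (E(x) → ∞ as ‖x‖ → ∞) and attains a global minimum on ℝ^N; consequently, the autonomous Hopfield network possesses at least one equilibrium point x* with u(x*) = 0. -/

import Mathlib

open Real Filter

noncomputable def F (lam s : ℝ) : ℝ := (2 / Real.pi) * Real.arctan (lam * Real.pi * s / 2)

noncomputable def G (lam s : ℝ) : ℝ := (2 / (lam * Real.pi ^ 2)) * Real.log (1 + (lam * Real.pi * s / 2) ^ 2)

noncomputable def u (N : ℕ) (lam g : ℝ) (ω : Fin N → Fin N → ℝ) (x : Fin N → ℝ) (i : Fin N) : ℝ :=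
  -x i + g * ∑ j, F lam (ω i j) * F lam (x j)

noncomputable def E (N : ℕ) (lam g : ℝ) (ω : Fin N → Fin N → ℝ) (x : Fin N → ℝ) : ℝ :=
  ∑ i, G lam (x i) - (g / 2) * ∑ i, ∑ j, F lam (ω i j) * F lam (x i) * F lam (x j)

noncomputable def F' (lam s : ℝ) : ℝ := lam / (1 + (lam * Real.pi * s / 2) ^ 2)

lemma denom_pos (lam s : ℝ) : (0:ℝ) < 1 + (lam * Real.pi * s / 2) ^ 2 := by positivity

lemma hasDerivAt_F (lam s : ℝ) : HasDerivAt (F lam) (F' lam s) s := by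
  have h1 : HasDerivAt (fun t : ℝ => lam * Real.pi * t / 2) (lam * Real.pi / 2) s := by
    simpa using ((hasDerivAt_id s).const_mul (lam * Real.pi)).div_const 2
  have h2 := (Real.hasDerivAt_arctan (lam * Real.pi * s / 2)).comp s h1
  have h3 := h2.const_mul (2 / Real.pi)
  refine h3.congr_deriv ?_
  have hpi := Real.pi_ne_zero
  unfold F'
  field_simp

lemma hasDerivAt_G (lam s : ℝ) (hlam : 0 < lam) : HasDerivAt (G lam) (s * F' lam s) s := by
  have h1 : HasDerivAt (fun t : ℝ => 1 + (lam * Real.pi * t / 2) ^ 2)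
      (2 * (lam * Real.pi * s / 2) * (lam * Real.pi / 2)) s := by
    have hi : HasDerivAt (fun t : ℝ => lam * Real.pi * t / 2) (lam * Real.pi / 2) s := by
      simpa using ((hasDerivAt_id s).const_mul (lam * Real.pi)).div_const 2
    simpa using (hi.pow 2).const_add 1
  have h2 := (h1.log (ne_of_gt (denom_pos lam s))).const_mul (2 / (lam * Real.pi ^ 2))
  refine h2.congr_deriv ?_
  have hpi := Real.pi_ne_zero
  have hd := ne_of_gt (denom_pos lam s)
  unfold F'
  field_simp

lemma F'_pos (lam s : ℝ) (hlam : 0 < lam) : 0 < F' lam s :=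
  div_pos hlam (denom_pos lam s)

lemma abs_F_le_one (lam s : ℝ) : |F lam s| ≤ 1 := by
  unfold F
  rw [abs_mul]
  have h1 : |2 / Real.pi| = 2 / Real.pi := abs_of_pos (by positivity)
  have h2 : |Real.arctan (lam * Real.pi * s / 2)| ≤ Real.pi / 2 := by
    rw [abs_le]
    constructor
    · linarith [Real.neg_pi_div_two_lt_arctan (lam * Real.pi * s / 2)]
    · linarith [Real.arctan_lt_pi_div_two (lam * Real.pi * s / 2)]
  rw [h1]
  calc 2 / Real.pi * |Real.arctan (lam * Real.pi * s / 2)|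
      ≤ 2 / Real.pi * (Real.pi / 2) := by
        exact mul_le_mul_of_nonneg_left h2 (by positivity)
    _ = 1 := by field_simp

lemma G_nonneg (lam s : ℝ) (hlam : 0 < lam) : 0 ≤ G lam s := by
  unfold G
  have : (0:ℝ) ≤ Real.log (1 + (lam * Real.pi * s / 2) ^ 2) :=
    Real.log_nonneg (by nlinarith [sq_nonneg (lam * Real.pi * s / 2)])
  positivity

lemma continuous_F (lam : ℝ) : Continuous (F lam) := by
  unfold F
  exact continuous_const.mul (Real.continuous_arctan.comp (by fun_prop))

lemma continuous_G (lam : ℝ) : Continuous (G lam) := by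
  unfold G
  apply Continuous.mul continuous_const
  exact Continuous.log (by fun_prop) (fun s => ne_of_gt (denom_pos lam s))

lemma pi_exists_norm_eq_abs (N : ℕ) (hN : 1 ≤ N) (x : Fin N → ℝ) : ∃ i, ‖x‖ = |x i| := by
  haveI : Nonempty (Fin N) := ⟨⟨0, hN⟩⟩
  obtain ⟨i, -, hi⟩ := Finset.exists_mem_eq_sup Finset.univ Finset.univ_nonempty
    (fun i => ‖x i‖₊)
  refine ⟨i, ?_⟩
  rw [Pi.norm_def, hi]
  simp [Real.norm_eq_abs]

lemma abs_FFF_le_one (lam a b c : ℝ) : |F lam a * F lam b * F lam c| ≤ 1 := by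
  rw [abs_mul, abs_mul]
  have ha := abs_F_le_one lam a
  have hb := abs_F_le_one lam b
  have hc := abs_F_le_one lam c
  have h1 : |F lam a| * |F lam b| ≤ 1 :=
    mul_le_one₀ ha (abs_nonneg _) hb
  exact mul_le_one₀ h1 (abs_nonneg _) hc

lemma E_lower_bound (N : ℕ) (hN : 1 ≤ N) (lam g : ℝ) (hlam : 0 < lam) (hg : 0 < g)
    (ω : Fin N → Fin N → ℝ) (x : Fin N → ℝ) :
    G lam ‖x‖ - (g / 2) * (N : ℝ) ^ 2 ≤ E N lam g ω x := by
  obtain ⟨i, hi⟩ := pi_exists_norm_eq_abs N hN x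
  have hGx : G lam ‖x‖ = G lam (x i) := by
    unfold G
    congr 1
    congr 1
    have hsq : ‖x‖ ^ 2 = (x i) ^ 2 := by rw [hi, sq_abs]
    linear_combination ((lam * Real.pi) ^ 2 / 4) * hsq
  have hsum : G lam (x i) ≤ ∑ k, G lam (x k) :=
    Finset.single_le_sum (fun k _ => G_nonneg lam (x k) hlam) (Finset.mem_univ i)
  have hS : |∑ k, ∑ j, F lam (ω k j) * F lam (x k) * F lam (x j)| ≤ (N : ℝ) ^ 2 := by
    calc |∑ k, ∑ j, F lam (ω k j) * F lam (x k) * F lam (x j)|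
        ≤ ∑ k, |∑ j, F lam (ω k j) * F lam (x k) * F lam (x j)| :=
          Finset.abs_sum_le_sum_abs _ _
      _ ≤ ∑ k : Fin N, ∑ j : Fin N, |F lam (ω k j) * F lam (x k) * F lam (x j)| :=
          Finset.sum_le_sum fun k _ => Finset.abs_sum_le_sum_abs _ _
      _ ≤ ∑ _k : Fin N, ∑ _j : Fin N, (1 : ℝ) :=
          Finset.sum_le_sum fun k _ => Finset.sum_le_sum fun j _ =>
            abs_FFF_le_one lam _ _ _
      _ = (N : ℝ) ^ 2 := by simp; ring
  have h2 : (g / 2) * ∑ k, ∑ j, F lam (ω k j) * F lam (x k) * F lam (x j)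
      ≤ (g / 2) * (N : ℝ) ^ 2 := by
    have := (abs_le.mp hS).2
    nlinarith [le_abs_self (∑ k, ∑ j, F lam (ω k j) * F lam (x k) * F lam (x j))]
  unfold E
  rw [hGx]
  linarith

lemma continuous_E (N : ℕ) (lam g : ℝ) (ω : Fin N → Fin N → ℝ) :
    Continuous (E N lam g ω) := by
  unfold E
  apply Continuous.sub
  · exact continuous_finset_sum _ fun i _ => (continuous_G lam).comp (continuous_apply i)
  · apply continuous_const.mul
    refine continuous_finset_sum _ fun i _ => continuous_finset_sum _ fun j _ => ?_
    exact (continuous_const.mul ((continuous_F lam).comp (continuous_apply i))).mul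
      ((continuous_F lam).comp (continuous_apply j))

lemma G_tendsto (lam : ℝ) (hlam : 0 < lam) : Tendsto (G lam) atTop atTop := by
  have h0 : Tendsto (fun r : ℝ => lam * Real.pi * r / 2) atTop atTop := by
    apply Tendsto.atTop_div_const (by norm_num : (0:ℝ) < 2)
    exact tendsto_id.const_mul_atTop (by positivity)
  have h1 : Tendsto (fun r : ℝ => 1 + (lam * Real.pi * r / 2) ^ 2) atTop atTop := by
    apply tendsto_atTop_add_const_left atTop 1
    exact (tendsto_pow_atTop (two_ne_zero)).comp h0
  have h2 := Real.tendsto_log_atTop.comp h1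
  have h3 := h2.const_mul_atTop (show (0:ℝ) < 2 / (lam * Real.pi ^ 2) by positivity)
  exact h3

lemma E_coercive (N : ℕ) (hN : 1 ≤ N) (lam g : ℝ) (hlam : 0 < lam) (hg : 0 < g)
    (ω : Fin N → Fin N → ℝ) :
    Tendsto (E N lam g ω) (cocompact (Fin N → ℝ)) atTop := by
  have hb : Tendsto (fun x : Fin N → ℝ => G lam ‖x‖ - (g / 2) * (N : ℝ) ^ 2)
      (cocompact (Fin N → ℝ)) atTop := by
    simp_rw [sub_eq_add_neg]
    apply tendsto_atTop_add_const_right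
    exact (G_tendsto lam hlam).comp tendsto_norm_cocompact_atTop
  exact tendsto_atTop_mono (fun x => E_lower_bound N hN lam g hlam hg ω x) hb


/-- For symmetric ω, the energy E is coercive and attains a global
minimum; consequently the network has at least one equilibrium point. -/
theorem hopfield_energy_coercive_and_equilibrium_exists (N : ℕ) (hN : 1 ≤ N) (lam g : ℝ)
    (hlam : 0 < lam) (hg : 0 < g) (ω : Fin N → Fin N → ℝ)
    (hsym : ∀ i j, ω i j = ω j i) :
    Tendsto (E N lam g ω) (cocompact (Fin N → ℝ)) atTop ∧
    (∃ x₀ : Fin N → ℝ, ∀ x, E N lam g ω x₀ ≤ E N lam g ω x) ∧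
    (∃ xs : Fin N → ℝ, ∀ i, u N lam g ω xs i = 0) := by
  have hcoer := E_coercive N hN lam g hlam hg ω
  haveI : Nonempty (Fin N) := ⟨⟨0, hN⟩⟩
  obtain ⟨x₀, hx₀⟩ := (continuous_E N lam g ω).exists_forall_le hcoer
  refine ⟨hcoer, ⟨x₀, hx₀⟩, ⟨x₀, ?_⟩⟩
  intro i
  set t₀ := x₀ i with ht₀
  set c := F' lam (x₀ i) with hc
  set S := ∑ j, F lam (ω i j) * F lam (x₀ j) with hSdef
  -- derivative of each coordinate of the update path
  have hupd : Function.update x₀ i t₀ = x₀ := Function.update_eq_self i x₀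
  have hv : ∀ k, HasDerivAt (fun t => Function.update x₀ i t k)
      (if k = i then 1 else 0) t₀ := by
    intro k
    rcases eq_or_ne k i with h | h
    · subst h
      simp only [Function.update_self, if_pos rfl]
      exact hasDerivAt_id t₀
    · simp only [if_neg h]
      have : (fun t => Function.update x₀ i t k) = fun _ => x₀ k := by
        funext t; simp [Function.update_apply, h]
      rw [this]
      exact hasDerivAt_const t₀ (x₀ k)
  have hFk : ∀ k, HasDerivAt (fun t => F lam (Function.update x₀ i t k))
      (if k = i then c else 0) t₀ := by
    intro k
    have h := (hasDerivAt_F lam (Function.update x₀ i t₀ k)).comp t₀ (hv k)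
    rw [hupd] at h
    rcases eq_or_ne k i with hki | hki
    · subst hki; simpa [Function.comp_def] using h
    · simpa [hki, Function.comp_def] using h
  have hGk : ∀ k, HasDerivAt (fun t => G lam (Function.update x₀ i t k))
      (if k = i then t₀ * c else 0) t₀ := by
    intro k
    have h := (hasDerivAt_G lam (Function.update x₀ i t₀ k) hlam).comp t₀ (hv k)
    rw [hupd] at h
    rcases eq_or_ne k i with hki | hki
    · subst hki; simpa [Function.comp_def] using h
    · simpa [hki, Function.comp_def] using h
  -- derivative of the first sum
  have hsum1 : HasDerivAt (fun t => ∑ k, G lam (Function.update x₀ i t k)) (t₀ * c) t₀ := by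
    have h := HasDerivAt.fun_sum (fun k (_ : k ∈ Finset.univ) => hGk k)
    simpa using h
  -- derivative of each product term
  have hterm : ∀ k j, HasDerivAt
      (fun t => F lam (ω k j) * F lam (Function.update x₀ i t k) *
        F lam (Function.update x₀ i t j))
      ((F lam (ω k j) * (if k = i then c else 0)) * F lam (x₀ j) +
        (F lam (ω k j) * F lam (x₀ k)) * (if j = i then c else 0)) t₀ := by
    intro k j
    have h := ((hFk k).const_mul (F lam (ω k j))).mul (hFk j)
    simp only [hupd] at h
    exact h
  have hsum2 : HasDerivAt
      (fun t => ∑ k, ∑ j, F lam (ω k j) * F lam (Function.update x₀ i t k) *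
        F lam (Function.update x₀ i t j))
      (2 * c * S) t₀ := by
    have h := HasDerivAt.fun_sum (fun k (_ : k ∈ Finset.univ) =>
      HasDerivAt.fun_sum (fun j (_ : j ∈ Finset.univ) => hterm k j))
    have hval : (∑ k, ∑ j, ((F lam (ω k j) * (if k = i then c else 0)) * F lam (x₀ j) +
        (F lam (ω k j) * F lam (x₀ k)) * (if j = i then c else 0))) = 2 * c * S := by
      simp_rw [Finset.sum_add_distrib]
      have h1 : (∑ k, ∑ j, (F lam (ω k j) * (if k = i then c else 0)) * F lam (x₀ j)) = c * S := by
        rw [Finset.sum_eq_single i]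
        · rw [hSdef, Finset.mul_sum]
          exact Finset.sum_congr rfl fun j _ => by simp; ring
        · intro k _ hk
          simp [hk]
        · intro h; exact absurd (Finset.mem_univ i) h
      have h2 : (∑ k, ∑ j, (F lam (ω k j) * F lam (x₀ k)) * (if j = i then c else 0)) = c * S := by
        have : ∀ k, (∑ j, (F lam (ω k j) * F lam (x₀ k)) * (if j = i then c else 0)) =
            (F lam (ω k i) * F lam (x₀ k)) * c := by
          intro k
          rw [Finset.sum_eq_single i]
          · simp
          · intro j _ hj; simp [hj]
          · intro h; exact absurd (Finset.mem_univ i) h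
        simp_rw [this]
        rw [hSdef, Finset.mul_sum]
        exact Finset.sum_congr rfl fun k _ => by rw [hsym k i]; ring
      rw [h1, h2]; ring
    rw [← hval]
    exact h
  -- total derivative of t ↦ E (update x₀ i t)
  have hE : HasDerivAt (fun t => E N lam g ω (Function.update x₀ i t))
      (t₀ * c - g / 2 * (2 * c * S)) t₀ := by
    have h := hsum1.sub (hsum2.const_mul (g / 2))
    exact h
  -- x₀ i is a local min of this 1-d function
  have hmin : IsLocalMin (fun t => E N lam g ω (Function.update x₀ i t)) t₀ := by
    apply Filter.Eventually.of_forall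
    intro t
    simpa [hupd] using hx₀ (Function.update x₀ i t)
  have hzero := hmin.hasDerivAt_eq_zero hE
  have hc0 : 0 < c := F'_pos lam (x₀ i) hlam
  have hxiS : x₀ i = g * S := by
    have : c * (x₀ i - g * S) = 0 := by linear_combination hzero - c * ht₀
    rcases mul_eq_zero.mp this with h | h
    · exact absurd h (ne_of_gt hc0)
    · linarith
  show -x₀ i + g * S = 0
  rw [hxiS]; ring
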